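/- Let n ≥ 1 and let U ⊆ ℂⁿ be a real linear subspace (ℂⁿ viewed as a real vector space of dimension 2n) such that (1) for every θ ∈ ℝ and x ∈ U one has e^{iθ}·x ∈ U, and (2) for every invertible real n×n matrix M and every x ∈ U one has M·x ∈ U (matrix–vector multiplication using the complexification of M). Then U = {0} or U = ℂⁿ. That is, the subgroup S¹·GL(n,ℝ) ⊂ GL(2n,ℝ) acts irreducibly on ℝ²ⁿ. -/

import Mathlib

/-- **`S¹·GL(n,ℝ)` acts irreducibly on `ℝ²ⁿ ≅ ℂⁿ`.**
If a real subspace `U ⊆ ℂⁿ` is stable under multiplication by all unit complex scalars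
`e^{iθ}` and under the (complexified) action of every invertible real `n × n` matrix,
then `U = 0` or `U = ℂⁿ`. -/
theorem s1_gln_irreducible (n : ℕ) (hn : 1 ≤ n) (U : Submodule ℝ (Fin n → ℂ))
    (hrot : ∀ (θ : ℝ), ∀ x ∈ U, Complex.exp ((θ : ℂ) * Complex.I) • x ∈ U)
    (hmat : ∀ M : Matrix (Fin n) (Fin n) ℝ, IsUnit M.det →
      ∀ x ∈ U, (M.map (fun a => (a : ℂ))).mulVec x ∈ U) :
    U = ⊥ ∨ U = ⊤ := by
  -- U is stable under multiplication by I
  have hI : ∀ x ∈ U, Complex.I • x ∈ U := by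
    intro x hx
    have h := hrot (Real.pi / 2) x hx
    rw [Complex.exp_mul_I, ← Complex.ofReal_cos, ← Complex.ofReal_sin,
      Real.cos_pi_div_two, Real.sin_pi_div_two] at h
    simpa using h
  have hI' : ∀ x ∈ U, Complex.I • x ∈ U := hI
  -- U is stable under all complex scalars
  have hC : ∀ (c : ℂ), ∀ x ∈ U, c • x ∈ U := by
    intro c x hx
    have h : c • x = c.re • x + c.im • (Complex.I • x) := by
      ext i
      simp only [Pi.add_apply, Pi.smul_apply, Complex.real_smul, smul_eq_mul]
      conv_lhs => rw [← Complex.re_add_im c]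
      ring
    rw [h]
    exact U.add_mem (U.smul_mem _ hx) (U.smul_mem _ (hI x hx))
  -- U is stable under all real matrices (not just invertible ones)
  have hM : ∀ M : Matrix (Fin n) (Fin n) ℝ, ∀ x ∈ U,
      (M.map (fun a => (a : ℂ))).mulVec x ∈ U := by
    intro M x hx
    obtain ⟨t, ht0, htM⟩ : ∃ t : ℝ, t ≠ 0 ∧
        IsUnit (t • (1 : Matrix (Fin n) (Fin n) ℝ) - M).det := by
      have hfin : (spectrum ℝ M ∪ {0}).Finite :=
        (Matrix.finite_spectrum M).union (Set.finite_singleton 0)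
      obtain ⟨t, ht⟩ := Set.Infinite.nonempty (Set.Finite.infinite_compl hfin)
      simp only [Set.mem_compl_iff, Set.mem_union, Set.mem_singleton_iff, not_or] at ht
      refine ⟨t, ht.2, ?_⟩
      have := spectrum.notMem_iff.mp ht.1
      rwa [Matrix.isUnit_iff_isUnit_det, Algebra.algebraMap_eq_smul_one] at this
    have ht1 : IsUnit (t • (1 : Matrix (Fin n) (Fin n) ℝ)).det := by
      rw [Matrix.det_smul, Matrix.det_one, mul_one, Fintype.card_fin]
      exact (isUnit_iff_ne_zero.mpr ht0).pow n
    have key : M.map (fun a => (a : ℂ)) =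
        (t • (1 : Matrix (Fin n) (Fin n) ℝ)).map (fun a => (a : ℂ)) -
        ((t • (1 : Matrix (Fin n) (Fin n) ℝ)) - M).map (fun a => (a : ℂ)) := by
      rw [← Matrix.map_sub _ (fun a b => by push_cast; ring), sub_sub_cancel]
    rw [key, Matrix.sub_mulVec]
    exact U.sub_mem (hmat _ ht1 x hx) (hmat _ htM x hx)
  -- conclusion
  rcases eq_or_ne U ⊥ with h | h
  · exact Or.inl h
  right
  obtain ⟨x, hxU, hx0⟩ := Submodule.exists_mem_ne_zero_of_ne_bot h
  obtain ⟨j, hj⟩ : ∃ j, x j ≠ 0 := Function.ne_iff.mp hx0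
  -- every Pi.single k c is in U
  have hsingle : ∀ (k : Fin n) (c : ℂ), Pi.single k c ∈ U := by
    intro k c
    have h1 := hM (Matrix.single k j 1) x hxU
    have h2 : (Matrix.single k j (1:ℝ)).map (fun a => (a : ℂ)) =
        Matrix.single k j (1:ℂ) := by
      ext i l
      simp [Matrix.single, Matrix.map_apply, apply_ite]
    rw [h2, Matrix.single_mulVec, one_mul] at h1
    have h3 : Function.update (0 : Fin n → ℂ) k (x j) = Pi.single k (x j) := by
      ext i; simp [Pi.single_apply, Function.update_apply]
    rw [h3] at h1
    have h4 := hC (c * (x j)⁻¹) _ h1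
    have h5 : (c * (x j)⁻¹) • (Pi.single k (x j) : Fin n → ℂ) = Pi.single k c := by
      ext i
      rcases eq_or_ne i k with rfl | hik
      · simp [mul_assoc, inv_mul_cancel₀ hj]
      · simp [Pi.single_apply, hik]
    rwa [h5] at h4
  rw [Submodule.eq_top_iff']
  intro y
  have : y = ∑ k, Pi.single k (y k) := by
    ext i; simp [Pi.single_apply]
  rw [this]
  exact Submodule.sum_mem U fun k _ => hsingle k (y k)
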